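/- Suppose an algebraic curvature tensor S on ℝ^n (n ≥ 4) satisfies the algebraic identity Q(S) - 2(n-1)S - 2(n-1)κ(κ-1)I = -L for some tensor L, where Q(S) ∈ T_S C, -S ∈ T_S C, L ∈ T_S C for a closed convex cone C containing S, with 0 < κ < 1 and I in the interior of T_S C. Then S lies in the interior of C. (Algebraic core of Proposition 4 of the paper.) -/

import Mathlib

open Finset

/-- Kronecker delta on `Fin n`. -/
def kron {n : ℕ} (i j : Fin n) : ℝ := if i = j then 1 else 0

/-- The identity curvature tensor `I_{ijkl} = δ_{ik}δ_{jl} - δ_{il}δ_{jk}`. -/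
def Idt (n : ℕ) : Fin n → Fin n → Fin n → Fin n → ℝ :=
  fun i j k l => kron i k * kron j l - kron i l * kron j k

/-- Hamilton's quadratic term `Q(R)`. -/
def Qc {n : ℕ} (R : Fin n → Fin n → Fin n → Fin n → ℝ) :
    Fin n → Fin n → Fin n → Fin n → ℝ :=
  fun i j k l =>
    (∑ p, ∑ q, R i j p q * R k l p q) +
    2 * ∑ p, ∑ q, (R i p k q * R j p l q - R i p l q * R j p k q)

/-- Algebraic curvature tensor: symmetries and first Bianchi identity. -/
def IsACT {n : ℕ} (R : Fin n → Fin n → Fin n → Fin n → ℝ) : Prop :=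
  (∀ i j k l, R i j k l = - R j i k l) ∧
  (∀ i j k l, R i j k l = - R i j l k) ∧
  (∀ i j k l, R i j k l = R k l i j) ∧
  (∀ i j k l, R i j k l + R j k i l + R k i j l = 0)

/-- Ricci tensor `Ric_{ik} = Σ_j R_{ijkj}`. -/
def Ric {n : ℕ} (R : Fin n → Fin n → Fin n → Fin n → ℝ) : Fin n → Fin n → ℝ :=
  fun i k => ∑ j, R i j k j

/-- Scalar curvature `scal = Σ_{i,j} R_{ijij}`. -/
def scal {n : ℕ} (R : Fin n → Fin n → Fin n → Fin n → ℝ) : ℝ := ∑ i, ∑ j, R i j i j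
open Finset

/-- A closed convex cone. -/
def IsClosedConvexCone {V : Type*} [AddCommGroup V] [Module ℝ V] [TopologicalSpace V]
    (C : Set V) : Prop :=
  IsClosed C ∧ Convex ℝ C ∧ ∀ r : ℝ, 0 ≤ r → ∀ x ∈ C, r • x ∈ C

/-- The tangent cone to `C` at `S`: the closure of `{λ (x - S) : x ∈ C, λ ≥ 0}`. -/
def tanCone {V : Type*} [AddCommGroup V] [Module ℝ V] [TopologicalSpace V]
    (C : Set V) (S : V) : Set V :=
  closure {v | ∃ x ∈ C, ∃ l : ℝ, 0 ≤ l ∧ v = l • (x - S)}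

section Aux

variable {V : Type*} [NormedAddCommGroup V] [NormedSpace ℝ V]

lemma kset_convex {C : Set V} {S : V} (hC : Convex ℝ C) :
    Convex ℝ {v : V | ∃ x ∈ C, ∃ l : ℝ, 0 ≤ l ∧ v = l • (x - S)} := by
  rintro v ⟨x, hx, l₁, hl₁, rfl⟩ w ⟨y, hy, l₂, hl₂, rfl⟩ a b ha hb hab
  rcases eq_or_lt_of_le (by positivity : (0:ℝ) ≤ a * l₁ + b * l₂) with hν | hν
  · refine ⟨x, hx, 0, le_refl 0, ?_⟩
    have h1 : a * l₁ = 0 := by nlinarith [mul_nonneg ha hl₁, mul_nonneg hb hl₂]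
    have h2 : b * l₂ = 0 := by nlinarith [mul_nonneg ha hl₁, mul_nonneg hb hl₂]
    rw [smul_smul, smul_smul, h1, h2]
    simp
  · have hν' : a * l₁ + b * l₂ ≠ 0 := ne_of_gt hν
    refine ⟨(a * l₁ / (a * l₁ + b * l₂)) • x + (b * l₂ / (a * l₁ + b * l₂)) • y,
      hC hx hy (by positivity) (by positivity) (by field_simp), a * l₁ + b * l₂, le_of_lt hν, ?_⟩
    match_scalars <;> field_simp <;> ring

lemma kset_smul {C : Set V} {S : V} {r : ℝ} (hr : 0 ≤ r) {v : V}
    (hv : v ∈ {v : V | ∃ x ∈ C, ∃ l : ℝ, 0 ≤ l ∧ v = l • (x - S)}) :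
    r • v ∈ {v : V | ∃ x ∈ C, ∃ l : ℝ, 0 ≤ l ∧ v = l • (x - S)} := by
  obtain ⟨x, hx, l, hl, rfl⟩ := hv
  exact ⟨x, hx, r * l, mul_nonneg hr hl, smul_smul r l _⟩

lemma tan_smul {C : Set V} {S : V} {r : ℝ} (hr : 0 ≤ r) {v : V}
    (hv : v ∈ tanCone C S) : r • v ∈ tanCone C S := by
  have hc : Continuous fun z : V => r • z := continuous_const_smul r
  have h1 : r • v ∈ closure ((fun z : V => r • z) ''
      {v : V | ∃ x ∈ C, ∃ l : ℝ, 0 ≤ l ∧ v = l • (x - S)}) :=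
    image_closure_subset_closure_image hc ⟨v, hv, rfl⟩
  refine closure_mono ?_ h1
  rintro _ ⟨w, hw, rfl⟩
  exact kset_smul hr hw

lemma tan_convex {C : Set V} {S : V} (hC : Convex ℝ C) : Convex ℝ (tanCone C S) :=
  (kset_convex hC).closure

lemma tan_add {C : Set V} {S : V} (hC : Convex ℝ C) :
    ∀ a ∈ tanCone C S, ∀ b ∈ tanCone C S, a + b ∈ tanCone C S := by
  intro a ha b hb
  have hmid : (1/2 : ℝ) • a + (1/2 : ℝ) • b ∈ tanCone C S :=
    tan_convex hC ha hb (by norm_num) (by norm_num) (by norm_num)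
  have h2 : (2:ℝ) • ((1/2 : ℝ) • a + (1/2 : ℝ) • b) ∈ tanCone C S :=
    tan_smul (by norm_num) hmid
  have heq : (2:ℝ) • ((1/2 : ℝ) • a + (1/2 : ℝ) • b) = a + b := by
    match_scalars <;> norm_num
  rwa [heq] at h2

lemma mem_interior_add {T : Set V} (hadd : ∀ a ∈ T, ∀ b ∈ T, a + b ∈ T) {a b : V}
    (ha : a ∈ interior T) (hb : b ∈ T) : a + b ∈ interior T := by
  have hop : IsOpen ((· + b) '' interior T) := (isOpenMap_add_right b) _ isOpen_interior
  have hsub : ((· + b) '' interior T) ⊆ T := by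
    rintro _ ⟨u, hu, rfl⟩
    exact hadd u (interior_subset hu) b hb
  exact interior_maximal hsub hop ⟨a, ha, rfl⟩

lemma mem_interior_smul {T : Set V} (hsmul : ∀ r : ℝ, 0 ≤ r → ∀ x ∈ T, r • x ∈ T)
    {c : ℝ} (hc : 0 < c) {a : V} (ha : a ∈ interior T) : c • a ∈ interior T := by
  have hop : IsOpen ((fun x : V => c • x) '' interior T) :=
    (isOpenMap_smul₀ hc.ne') _ isOpen_interior
  have hsub : ((fun x : V => c • x) '' interior T) ⊆ T := by
    rintro _ ⟨u, hu, rfl⟩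
    exact hsmul c hc.le u (interior_subset hu)
  exact interior_maximal hsub hop ⟨a, ha, rfl⟩

lemma mem_interior_of_mem_interior_closure {K : Set V} (hK : Convex ℝ K) {p w : V}
    (hp : p ∈ interior K) (hw : w ∈ interior (closure K)) : w ∈ interior K := by
  have hcont : Continuous fun t : ℝ => w + t • (w - p) := by continuity
  have h0 : (fun t : ℝ => w + t • (w - p)) ⁻¹' interior (closure K) ∈ nhds (0:ℝ) := by
    apply (hcont.isOpen_preimage _ isOpen_interior).mem_nhds
    simpa using hw
  obtain ⟨ε, hε, hball⟩ := Metric.mem_nhds_iff.1 h0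
  have htpos : 0 < ε / 2 := by positivity
  have hy : w + (ε/2) • (w - p) ∈ closure K := by
    refine interior_subset (hball ?_)
    simp only [Metric.mem_ball, Real.dist_eq, sub_zero]
    rw [abs_of_pos htpos]
    linarith
  have h1t : (0:ℝ) < 1 + ε/2 := by linarith
  have key := hK.combo_interior_closure_mem_interior hp hy
    (a := (ε/2)/(1+ε/2)) (b := 1/(1+ε/2)) (by positivity) (by positivity)
    (by field_simp; ring)
  have heq : ((ε/2)/(1+ε/2)) • p + (1/(1+ε/2)) • (w + (ε/2) • (w - p)) = w := by
    match_scalars <;> field_simp <;> ring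
  rwa [heq] at key

lemma main_aux [FiniteDimensional ℝ V] {C : Set V} (hC : Convex ℝ C) {S : V} (hS : S ∈ C)
    (h0 : (0:V) ∈ interior (tanCone C S)) : S ∈ interior C := by
  set K := {v : V | ∃ x ∈ C, ∃ l : ℝ, 0 ≤ l ∧ v = l • (x - S)} with hKdef
  have hTK : tanCone C S = closure K := rfl
  set D := (fun x : V => x - S) '' C with hDdef
  have h0D : (0:V) ∈ D := ⟨S, hS, sub_self S⟩
  have hDconv : Convex ℝ D := by
    have h := hC.translate (-S)
    have : (fun x : V => -S + x) '' C = D := by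
      ext z; constructor
      · rintro ⟨x, hx, rfl⟩; exact ⟨x, hx, by abel⟩
      · rintro ⟨x, hx, rfl⟩; exact ⟨x, hx, by abel⟩
    rwa [this] at h
  have hDK : D ⊆ K := by
    rintro _ ⟨x, hx, rfl⟩
    exact ⟨x, hx, 1, zero_le_one, (one_smul _ _).symm⟩
  have hKspan : K ⊆ (Submodule.span ℝ D : Set V) := by
    rintro _ ⟨x, hx, l, hl, rfl⟩
    exact Submodule.smul_mem _ l (Submodule.subset_span ⟨x, hx, rfl⟩)
  have hTspan : tanCone C S ⊆ (Submodule.span ℝ D : Set V) :=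
    closure_minimal hKspan (Submodule.closed_of_finiteDimensional _)
  have hspan_top : Submodule.span ℝ D = ⊤ :=
    Submodule.eq_top_of_nonempty_interior' _ ⟨0, interior_mono hTspan h0⟩
  have haff : affineSpan ℝ D = ⊤ := by
    refine AffineSubspace.ext fun v => ⟨fun _ => trivial, fun _ => ?_⟩
    have hv : v ∈ Submodule.span ℝ D := hspan_top ▸ Submodule.mem_top
    have hdir : Submodule.span ℝ D ≤ (affineSpan ℝ D).direction := by
      rw [Submodule.span_le]
      intro d hd
      have := AffineSubspace.vsub_mem_direction (subset_affineSpan ℝ D hd)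
        (subset_affineSpan ℝ D h0D)
      simpa using this
    have := AffineSubspace.vadd_mem_of_mem_direction (hdir hv) (subset_affineSpan ℝ D h0D)
    simpa using this
  obtain ⟨p, hp⟩ := (hDconv.interior_nonempty_iff_affineSpan_eq_top).2 haff
  have hKconv : Convex ℝ K := kset_convex hC
  have hpK : p ∈ interior K := interior_mono hDK hp
  have h0K : (0:V) ∈ interior K :=
    mem_interior_of_mem_interior_closure hKconv hpK (hTK ▸ h0)
  have h0D' : (0:V) ∈ interior D := by
    by_cases hp0 : p = 0
    · exact hp0 ▸ hp
    · have hcont : Continuous fun δ : ℝ => (-δ) • p := by continuity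
      have hmem : (fun δ : ℝ => (-δ) • p) ⁻¹' interior K ∈ nhds (0:ℝ) := by
        apply (hcont.isOpen_preimage _ isOpen_interior).mem_nhds
        simpa using h0K
      obtain ⟨ε, hε, hball⟩ := Metric.mem_nhds_iff.1 hmem
      have hδp : 0 < ε/2 := by positivity
      have hδ : (-(ε/2)) • p ∈ K := by
        refine interior_subset (hball ?_)
        simp only [Metric.mem_ball, Real.dist_eq, sub_zero]
        rw [abs_of_pos hδp]
        linarith
      obtain ⟨x, hx, l, hl, hxl⟩ := hδ
      have hl0 : 0 < l := by
        rcases eq_or_lt_of_le hl with h | h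
        · exfalso
          rw [← h, zero_smul] at hxl
          have hne : (-(ε/2)) ≠ 0 := by simp; linarith
          exact hp0 ((smul_eq_zero.1 hxl).resolve_left hne)
        · exact h
      have hdD : x - S ∈ D := ⟨x, hx, rfl⟩
      have hd : x - S = (-(ε/2)/l) • p := by
        have h2 : l • (x - S) = l • ((-(ε/2)/l) • p) := by
          rw [← hxl, smul_smul]
          congr 1
          field_simp
        exact smul_right_injective V hl0.ne' h2
      set c : ℝ := (ε/2)/l with hc
      have hcpos : 0 < c := by positivity
      have hzero : (0:V) ∈ openSegment ℝ p (x - S) := by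
        refine ⟨c/(1+c), 1/(1+c), by positivity, by positivity, by field_simp; ring, ?_⟩
        rw [hd]
        have h1c : (0:ℝ) < 1 + c := by linarith
        have : -(ε/2)/l = -c := by rw [hc]; ring
        rw [this]
        match_scalars
        field_simp
        ring
      exact hDconv.openSegment_interior_closure_subset_interior hp (subset_closure hdD) hzero
  have himg : interior D = (fun x : V => x - S) '' interior C := by
    have : D = (Homeomorph.subRight S) '' C := rfl
    rw [this, ← Homeomorph.image_interior]
    rfl
  rw [himg] at h0D'
  obtain ⟨x, hx, hx0⟩ := h0D'
  have : x = S := by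
    have := sub_eq_zero.1 hx0
    exact this
  rwa [this] at hx

end Aux

/-- Algebraic core of Proposition 4: if `Q(S) - 2(n-1)S - 2(n-1)κ(κ-1)I = -L` with
`Q(S), -S, L ∈ T_S C`, `0 < κ < 1`, and `I` in the interior of `T_S C`,
then `S` lies in the interior of `C`. -/
theorem stmt10 (n : ℕ) (hn : 4 ≤ n) (C : Set (Fin n → Fin n → Fin n → Fin n → ℝ))
    (hC : IsClosedConvexCone C) (S : Fin n → Fin n → Fin n → Fin n → ℝ)
    (hSact : IsACT S) (hS : S ∈ C) (κ : ℝ) (hκ0 : 0 < κ) (hκ1 : κ < 1)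
    (L : Fin n → Fin n → Fin n → Fin n → ℝ)
    (heq : ∀ i j k l, Qc S i j k l - 2 * ((n : ℝ) - 1) * S i j k l
        - 2 * ((n : ℝ) - 1) * κ * (κ - 1) * Idt n i j k l = -L i j k l)
    (hQ : Qc S ∈ tanCone C S) (hmS : -S ∈ tanCone C S)
    (hL : L ∈ tanCone C S) (hI : Idt n ∈ interior (tanCone C S)) :
    S ∈ interior C := by
  have hn4 : (4:ℝ) ≤ (n:ℝ) := by exact_mod_cast hn
  have hn1 : (0:ℝ) < 2 * ((n:ℝ) - 1) := by linarith
  set c : ℝ := (2 * ((n:ℝ) - 1))⁻¹ with hcdef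
  have hcpos : 0 < c := inv_pos.2 hn1
  have hSdecomp : S = c • Qc S + c • L + (κ*(1-κ)) • Idt n := by
    funext i j k l
    have h := heq i j k l
    simp only [Pi.add_apply, Pi.smul_apply, smul_eq_mul, hcdef]
    have hne : 2 * ((n:ℝ) - 1) ≠ 0 := hn1.ne'
    have hc1 : (2 * ((n:ℝ) - 1))⁻¹ * (2 * ((n:ℝ) - 1)) = 1 := inv_mul_cancel₀ hne
    linear_combination (-(2 * ((n:ℝ) - 1))⁻¹) * h - (S i j k l + κ * (κ - 1) * Idt n i j k l) * hc1
  have hconvC : Convex ℝ C := hC.2.1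
  have hadd := tan_add (C := C) (S := S) hconvC
  have hsmul : ∀ r : ℝ, 0 ≤ r → ∀ x ∈ tanCone C S, r • x ∈ tanCone C S :=
    fun r hr x hx => tan_smul hr hx
  have h1 : (κ*(1-κ)) • Idt n ∈ interior (tanCone C S) :=
    mem_interior_smul hsmul (by nlinarith) hI
  have h2 := mem_interior_add hadd h1 (tan_smul hcpos.le hQ)
  have h3 := mem_interior_add hadd h2 (tan_smul hcpos.le hL)
  have hSin : S ∈ interior (tanCone C S) := by
    have he : (κ*(1-κ)) • Idt n + c • Qc S + c • L = S := by
      conv_rhs => rw [hSdecomp]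
      abel
    rwa [he] at h3
  have h0 : (0 : Fin n → Fin n → Fin n → Fin n → ℝ) ∈ interior (tanCone C S) := by
    have h4 := mem_interior_add hadd hSin hmS
    rwa [add_neg_cancel] at h4
  exact main_aux hconvC hS h0
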